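/- arXiv:2605.23864 — 5 statements merged into one kernel-verified Lean document; each statement's English description precedes it below -/
import Mathlib

section
/- Let W be an N×N real matrix that is symmetric, has nonnegative entries, every row sum equal to 1, is positive semidefinite, and satisfies w_{ii} > 0 for all i; assume moreover that the graph on vertices {1,…,N} having an edge between distinct i and j whenever w_{ij} > 0 is connected. Then W₀ := W − (1/N)𝟙_N𝟙_Nᵀ is symmetric positive semidefinite and all of its eigenvalues lie in the interval [0,1); equivalently, the operator norm of W₀ is strictly less than 1. -/
open Matrix Finset

private lemma walk_const {N : ℕ} (W : Matrix (Fin N) (Fin N) ℝ) (y : Fin N → ℝ)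
    (hconn : (SimpleGraph.fromRel fun i j : Fin N => 0 < W i j).Connected)
    (h : ∀ i j, 0 < W i j → y i = y j) : ∀ i j, y i = y j := by
  intro i j
  obtain ⟨w⟩ := hconn.preconnected i j
  induction w with
  | nil => rfl
  | cons hadj _ ih =>
    rw [SimpleGraph.fromRel_adj] at hadj
    rcases hadj.2 with hw | hw
    · exact (h _ _ hw).trans ih
    · exact ((h _ _ hw).symm).trans ih

private lemma lap_identity {N : ℕ} (W : Matrix (Fin N) (Fin N) ℝ)
    (hrow : ∀ i, ∑ s, W i s = 1) (hcol : ∀ j, ∑ i, W i j = 1) (y : Fin N → ℝ) :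
    ∑ i, ∑ j, W i j * (y i - y j) ^ 2
      = 2 * ((∑ i, y i ^ 2) - ∑ i, ∑ j, W i j * y i * y j) := by
  have e1 : ∑ i, ∑ j, W i j * y i ^ 2 = ∑ i, y i ^ 2 := by
    refine Finset.sum_congr rfl fun i _ => ?_
    rw [← Finset.sum_mul, hrow i, one_mul]
  have e2 : ∑ i, ∑ j, W i j * y j ^ 2 = ∑ j, y j ^ 2 := by
    rw [Finset.sum_comm]
    refine Finset.sum_congr rfl fun j _ => ?_
    rw [← Finset.sum_mul, hcol j, one_mul]
  have expand : ∀ i j, W i j * (y i - y j) ^ 2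
      = W i j * y i ^ 2 + W i j * y j ^ 2 - 2 * (W i j * y i * y j) := by
    intro i j; ring
  simp_rw [expand, Finset.sum_sub_distrib, Finset.sum_add_distrib, ← Finset.mul_sum]
  rw [e1, e2]
  ring

private lemma strict_quad {N : ℕ} (W : Matrix (Fin N) (Fin N) ℝ)
    (hnonneg : ∀ i j, 0 ≤ W i j)
    (hrow : ∀ i, ∑ s, W i s = 1) (hcol : ∀ j, ∑ i, W i j = 1)
    (hconn : (SimpleGraph.fromRel fun i j : Fin N => 0 < W i j).Connected)
    (y : Fin N → ℝ) (hy : y ≠ 0) (hsum : ∑ i, y i = 0) :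
    ∑ i, ∑ j, W i j * y i * y j < ∑ i, y i ^ 2 := by
  have hT : 0 < ∑ i, ∑ j, W i j * (y i - y j) ^ 2 := by
    have hnn : ∀ i j, 0 ≤ W i j * (y i - y j) ^ 2 :=
      fun i j => mul_nonneg (hnonneg i j) (sq_nonneg _)
    rcases (Finset.sum_nonneg fun i _ => Finset.sum_nonneg fun j _ => hnn i j).lt_or_eq
      with h | h
    · exact h
    exfalso
    have hz : ∀ i j, W i j * (y i - y j) ^ 2 = 0 := by
      have h1 := (Finset.sum_eq_zero_iff_of_nonneg
        (fun i _ => Finset.sum_nonneg fun j _ => hnn i j)).1 h.symm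
      intro i j
      exact (Finset.sum_eq_zero_iff_of_nonneg (fun j _ => hnn i j)).1
        (h1 i (Finset.mem_univ i)) j (Finset.mem_univ j)
    have hconst : ∀ i j, y i = y j := by
      refine walk_const W y hconn fun i j hij => ?_
      have h2 : (y i - y j) ^ 2 = 0 := by
        rcases mul_eq_zero.1 (hz i j) with h' | h'
        · exact absurd h' hij.ne'
        · exact h'
      have := pow_eq_zero_iff (n := 2) (by norm_num) |>.1 h2
      linarith
    obtain ⟨i₀, hi₀⟩ := Function.ne_iff.1 hy
    have hsum2 : ∑ i, y i = (N : ℝ) * y i₀ := by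
      rw [Finset.sum_congr rfl fun i _ => hconst i i₀]
      simp [Finset.card_univ, mul_comm]
    rw [hsum] at hsum2
    have hNr : (0 : ℝ) < (N : ℝ) := by exact_mod_cast Fin.pos i₀
    have : y i₀ = 0 := by
      rcases mul_eq_zero.1 hsum2.symm with h' | h'
      · exact absurd h' hNr.ne'
      · exact h'
    exact hi₀ (by simpa using this)
  have := lap_identity W hrow hcol y
  linarith

/-- If W is symmetric, entrywise nonnegative, row-stochastic, positive semidefinite,
has positive diagonal, and its positive off-diagonal support graph is connected, then
W₀ = W − (1/N)𝟙𝟙ᵀ is symmetric positive semidefinite with all eigenvalues in [0,1). -/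
theorem stmt5 (N : ℕ) (W : Matrix (Fin N) (Fin N) ℝ)
    (hsymm : W.IsSymm) (hnonneg : ∀ i j, 0 ≤ W i j)
    (hrow : ∀ i, ∑ s, W i s = 1) (hpsd : W.PosSemidef)
    (hdiag : ∀ i, 0 < W i i)
    (hconn : (SimpleGraph.fromRel fun i j : Fin N => 0 < W i j).Connected) :
    (W - (N : ℝ)⁻¹ • Matrix.of fun _ _ : Fin N => (1 : ℝ)).IsSymm ∧
    (W - (N : ℝ)⁻¹ • Matrix.of fun _ _ : Fin N => (1 : ℝ)).PosSemidef ∧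
    ∀ μ ∈ spectrum ℝ (W - (N : ℝ)⁻¹ • Matrix.of fun _ _ : Fin N => (1 : ℝ)),
      μ ∈ Set.Ico (0 : ℝ) 1 := by
  have hNpos : 0 < N := by
    obtain ⟨i⟩ := hconn.nonempty
    exact Fin.pos i
  have hN : (0 : ℝ) < (N : ℝ) := by exact_mod_cast hNpos
  have hsym' : ∀ i j, W i j = W j i := by
    intro i j
    conv_lhs => rw [← hsymm]
    rfl
  have hcol : ∀ j, ∑ i, W i j = 1 := by
    intro j
    rw [Finset.sum_congr rfl fun i _ => hsym' i j]
    exact hrow j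
  set W₀ := W - (N : ℝ)⁻¹ • Matrix.of fun _ _ : Fin N => (1 : ℝ) with hW₀
  have hQW : ∀ x : Fin N → ℝ, x ⬝ᵥ (W *ᵥ x) = ∑ i, ∑ j, W i j * x i * x j := by
    intro x
    simp only [dotProduct, mulVec, dotProduct]
    refine Finset.sum_congr rfl fun i _ => ?_
    rw [Finset.mul_sum]
    exact Finset.sum_congr rfl fun j _ => by ring
  have hQ0 : ∀ x : Fin N → ℝ,
      x ⬝ᵥ (W₀ *ᵥ x) = (∑ i, ∑ j, W i j * x i * x j) - (N : ℝ)⁻¹ * (∑ i, x i) ^ 2 := by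
    intro x
    rw [hW₀, sub_mulVec, dotProduct_sub, hQW, smul_mulVec, dotProduct_smul]
    congr 1
    have hJ : (Matrix.of fun _ _ : Fin N => (1 : ℝ)) *ᵥ x = fun _ => ∑ j, x j := by
      funext i; simp [mulVec, dotProduct]
    rw [hJ]
    simp only [dotProduct, smul_eq_mul]
    rw [← Finset.sum_mul]
    ring
  have key : ∀ x : Fin N → ℝ,
      (∑ i, ∑ j, W i j * x i * x j) - (N : ℝ)⁻¹ * (∑ i, x i) ^ 2
        = ∑ i, ∑ j, W i j * (x i - (∑ s, x s) / N) * (x j - (∑ s, x s) / N) := by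
    intro x
    set S := ∑ s, x s with hS
    have t1 : ∑ i, ∑ j, W i j * x i = S :=
      Finset.sum_congr rfl fun i _ => by rw [← Finset.sum_mul, hrow i, one_mul]
    have t2 : ∑ i, ∑ j, W i j * x j = S := by
      rw [Finset.sum_comm]
      exact Finset.sum_congr rfl fun j _ => by rw [← Finset.sum_mul, hcol j, one_mul]
    have t3 : ∑ i, ∑ j, W i j = (N : ℝ) := by
      rw [Finset.sum_congr rfl fun i _ => hrow i]
      simp
    have expand : ∀ i j, W i j * (x i - S / N) * (x j - S / N)
        = W i j * x i * x j - (S / N) * (W i j * x i) - (S / N) * (W i j * x j)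
          + (S / N) ^ 2 * W i j := by
      intro i j; ring
    calc (∑ i, ∑ j, W i j * x i * x j) - (N : ℝ)⁻¹ * S ^ 2
        = (∑ i, ∑ j, W i j * x i * x j) - (S / N) * S - (S / N) * S
          + (S / N) ^ 2 * (N : ℝ) := by field_simp; ring
      _ = (∑ i, ∑ j, W i j * x i * x j)
          - (S / N) * (∑ i, ∑ j, W i j * x i)
          - (S / N) * (∑ i, ∑ j, W i j * x j)
          + (S / N) ^ 2 * (∑ i, ∑ j, W i j) := by rw [t1, t2, t3]
      _ = ∑ i, ∑ j, W i j * (x i - S / N) * (x j - S / N) := by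
          simp_rw [expand, Finset.sum_add_distrib, Finset.sum_sub_distrib,
            ← Finset.mul_sum]
  -- symmetry of W₀
  have hsymm0 : W₀.IsSymm := by
    rw [hW₀]
    unfold Matrix.IsSymm
    rw [transpose_sub, transpose_smul, hsymm]
    congr 1
  -- positive semidefiniteness of W₀
  have hpsd0 : W₀.PosSemidef := by
    rw [posSemidef_iff_dotProduct_mulVec]
    constructor
    · show W₀ᴴ = W₀
      rw [conjTranspose_eq_transpose_of_trivial]
      exact hsymm0
    · intro x
      rw [star_trivial, hQ0 x, key x]
      have : ∑ i, ∑ j, W i j * (x i - (∑ s, x s) / N) * (x j - (∑ s, x s) / N)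
          = (fun i => x i - (∑ s, x s) / N) ⬝ᵥ (W *ᵥ fun i => x i - (∑ s, x s) / N) := by
        rw [hQW]
      rw [this]
      have h := hpsd.dotProduct_mulVec_nonneg (fun i => x i - (∑ s, x s) / N)
      rwa [star_trivial] at h
  -- the strict quadratic bound
  have main_lt : ∀ x : Fin N → ℝ, x ≠ 0 → x ⬝ᵥ (W₀ *ᵥ x) < x ⬝ᵥ x := by
    intro x hx
    set S := ∑ s, x s with hS
    set y : Fin N → ℝ := fun i => x i - S / N with hy
    have hQ : x ⬝ᵥ (W₀ *ᵥ x) = ∑ i, ∑ j, W i j * y i * y j := by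
      rw [hQ0 x, key x]
    have hxx : x ⬝ᵥ x = (∑ i, y i ^ 2) + (N : ℝ)⁻¹ * S ^ 2 := by
      simp only [dotProduct]
      have e : ∀ i, y i ^ 2 = x i * x i - 2 * (S / N) * x i + (S / N) ^ 2 := by
        intro i; simp only [hy]; ring
      simp_rw [e, Finset.sum_add_distrib, Finset.sum_sub_distrib, ← Finset.mul_sum,
        Finset.sum_const, Finset.card_univ, Fintype.card_fin, nsmul_eq_mul]
      rw [← hS]
      field_simp
      ring
    have hsumy : ∑ i, y i = 0 := by
      simp only [hy]
      rw [Finset.sum_sub_distrib, Finset.sum_const, Finset.card_univ, Fintype.card_fin,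
        nsmul_eq_mul, ← hS]
      field_simp
      ring
    by_cases hy0 : y = 0
    · obtain ⟨i, hi⟩ := Function.ne_iff.1 hx
      have hxi : x i = S / N := by
        have := congrFun hy0 i
        simp only [hy, Pi.zero_apply] at this
        linarith
      have hSne : S ≠ 0 := by
        intro h
        apply hi
        rw [hxi, h, zero_div]
        simp
      have h1 : x ⬝ᵥ (W₀ *ᵥ x) = 0 := by
        rw [hQ]
        simp [hy0]
      have h2 : (0 : ℝ) < (N : ℝ)⁻¹ * S ^ 2 := by positivity
      rw [h1, hxx, hy0]
      simpa using h2
    · have hlt := strict_quad W hnonneg hrow hcol hconn y hy0 hsumy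
      have h2 : (0 : ℝ) ≤ (N : ℝ)⁻¹ * S ^ 2 := by positivity
      rw [hQ, hxx]
      linarith
  refine ⟨hsymm0, hpsd0, ?_⟩
  intro μ hμ
  rw [spectrum.mem_iff, Matrix.isUnit_iff_isUnit_det, isUnit_iff_ne_zero, not_not] at hμ
  obtain ⟨v, hv, hMv⟩ := (Matrix.exists_mulVec_eq_zero_iff).2 hμ
  rw [sub_mulVec, Algebra.algebraMap_eq_smul_one, smul_mulVec, one_mulVec,
    sub_eq_zero] at hMv
  have heig : W₀ *ᵥ v = μ • v := hMv.symm
  have hvv : 0 < v ⬝ᵥ v := by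
    obtain ⟨i, hi⟩ := Function.ne_iff.1 hv
    have hi' : v i ≠ 0 := by simpa using hi
    exact Finset.sum_pos' (fun j _ => mul_self_nonneg _)
      ⟨i, Finset.mem_univ i, mul_self_pos.2 hi'⟩
  have h1 : v ⬝ᵥ (W₀ *ᵥ v) = μ * (v ⬝ᵥ v) := by
    rw [heig, dotProduct_smul, smul_eq_mul]
  have h2 : 0 ≤ v ⬝ᵥ (W₀ *ᵥ v) := by
    have h := hpsd0.dotProduct_mulVec_nonneg v
    rwa [star_trivial] at h
  have h3 : v ⬝ᵥ (W₀ *ᵥ v) < v ⬝ᵥ v := main_lt v hv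
  constructor
  · nlinarith
  · nlinarith
end

section
/- Let W₀ be a real symmetric positive semidefinite a×a matrix all of whose eigenvalues are strictly less than 1. Define Q = [[2I_a, (I_a−W₀)⁻¹ − 2I_a], [(I_a−W₀)⁻¹ − 2I_a, (I_a−W₀)⁻² − 2(I_a−W₀)⁻¹ + 2I_a]] and U₀ = [[W₀, W₀],[0, W₀]]. Then Q − U₀ᵀ Q U₀ equals the block matrix [[2(I_a−W₀)(I_a+W₀), −(I_a−W₀)],[−(I_a−W₀), I_a]], and this matrix is symmetric positive definite. -/
open Matrix Pointwise

/-- A positive semidefinite matrix that is a unit is positive definite. -/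
lemma psd_isUnit_posDef {n : Type*} [Fintype n] [DecidableEq n]
    {M : Matrix n n ℝ} (h : M.PosSemidef) (hu : IsUnit M) : M.PosDef := by
  exact h.posDef_iff_isUnit.mpr hu

lemma one_sub_posDef {a : ℕ} {W : Matrix (Fin a) (Fin a) ℝ}
    (hpsd : W.PosSemidef) (hspec : ∀ μ ∈ spectrum ℝ W, μ < 1) :
    (1 - W).PosDef := by
  have hH : (1 - W).IsHermitian := (Matrix.isHermitian_one).sub hpsd.1
  have heig : ∀ i, 0 < hH.eigenvalues i := by
    intro i
    have hmem : hH.eigenvalues i ∈ spectrum ℝ (1 - W) := hH.eigenvalues_mem_spectrum_real i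
    have hmem' : hH.eigenvalues i ∈ ({(1:ℝ)} : Set ℝ) - spectrum ℝ W := by
      rw [spectrum.singleton_sub_eq]; simpa using hmem
    obtain ⟨x, hx, y, hy, hxy⟩ := Set.mem_sub.mp hmem'
    rw [Set.mem_singleton_iff] at hx
    subst hx
    have := hspec y hy
    linarith [hxy ▸ (by linarith : (0:ℝ) < 1 - y)]
  have hpsd' : (1 - W).PosSemidef := hH.posSemidef_iff_eigenvalues_nonneg.mpr fun i => (heig i).le
  have hdet : (1 - W).det ≠ 0 := by
    rw [hH.det_eq_prod_eigenvalues]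
    exact (Finset.prod_pos fun i _ => heig i).ne'
  exact psd_isUnit_posDef hpsd' ((Matrix.isUnit_iff_isUnit_det _).mpr hdet.isUnit)

/-- For symmetric PSD W₀ with eigenvalues < 1, the matrix Q − U₀ᵀQU₀ equals the stated
block matrix and is symmetric positive definite. -/
theorem stmt9 (a : ℕ) (W₀ : Matrix (Fin a) (Fin a) ℝ)
    (hpsd : W₀.PosSemidef) (hspec : ∀ μ ∈ spectrum ℝ W₀, μ < 1)
    (Q U₀ : Matrix (Fin a ⊕ Fin a) (Fin a ⊕ Fin a) ℝ)
    (hQ : Q = Matrix.fromBlocks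
      (2 • (1 : Matrix (Fin a) (Fin a) ℝ)) ((1 - W₀)⁻¹ - 2 • 1)
      ((1 - W₀)⁻¹ - 2 • 1) (((1 - W₀)⁻¹) ^ 2 - 2 • (1 - W₀)⁻¹ + 2 • 1))
    (hU₀ : U₀ = Matrix.fromBlocks W₀ W₀ 0 W₀) :
    Q - U₀ᵀ * Q * U₀ =
      Matrix.fromBlocks (2 • ((1 - W₀) * (1 + W₀))) (-(1 - W₀)) (-(1 - W₀)) 1 ∧
    (Q - U₀ᵀ * Q * U₀).PosDef := by
  have hP : (1 - W₀).PosDef := one_sub_posDef hpsd hspec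
  have hWt : W₀ᵀ = W₀ := by
    rw [← conjTranspose_eq_transpose_of_trivial]; exact hpsd.1
  set A := (1 - W₀)⁻¹ with hA
  have h2 : A * (1 - W₀) = 1 := Matrix.nonsing_inv_mul _ hP.det_pos.ne'.isUnit
  have h3 : (1 - W₀) * A = 1 := Matrix.mul_nonsing_inv _ hP.det_pos.ne'.isUnit
  have hAW : A * W₀ = A - 1 := by
    have := h2; rw [mul_sub, mul_one] at this
    linear_combination (norm := abel) -this
  have hWA : W₀ * A = A - 1 := by
    have := h3; rw [sub_mul, one_mul] at this
    linear_combination (norm := abel) -this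
  have hWAA : W₀ * (A * A) = A * A - A := by
    rw [← mul_assoc, hWA, sub_mul, one_mul]
  have key : Q - U₀ᵀ * Q * U₀ =
      Matrix.fromBlocks (2 • ((1 - W₀) * (1 + W₀))) (-(1 - W₀)) (-(1 - W₀)) 1 := by
    subst hQ hU₀
    rw [fromBlocks_transpose, hWt, transpose_zero, fromBlocks_multiply, fromBlocks_multiply]
    rw [show ∀ (X Y Z V X' Y' Z' V' : Matrix (Fin a) (Fin a) ℝ),
      fromBlocks X Y Z V - fromBlocks X' Y' Z' V'
        = fromBlocks (X - X') (Y - Y') (Z - Z') (V - V') from fun X Y Z V X' Y' Z' V' => by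
        rw [sub_eq_add_neg, show -fromBlocks X' Y' Z' V' = fromBlocks (-X') (-Y') (-Z') (-V') from
          Matrix.fromBlocks_neg X' Y' Z' V', fromBlocks_add, sub_eq_add_neg, sub_eq_add_neg,
          sub_eq_add_neg, sub_eq_add_neg]]
    rw [fromBlocks_inj]
    refine ⟨?_, ?_, ?_, ?_⟩
    all_goals
      simp only [pow_two, Matrix.zero_mul, Matrix.mul_zero, add_zero, zero_add,
        Matrix.mul_smul, Matrix.smul_mul, mul_one, one_mul, Matrix.mul_sub, Matrix.sub_mul,
        Matrix.mul_add, Matrix.add_mul, mul_assoc, hAW, hWA, hWAA]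
    all_goals abel
  refine ⟨key, ?_⟩
  rw [key]
  have hPH : (-(1 - W₀))ᴴ = -(1 - W₀) := by rw [conjTranspose_neg, hP.1.eq]
  set S : Matrix (Fin a) (Fin a) ℝ := 1 + (W₀ + (W₀ + W₀)) with hS
  have hSpd : S.PosDef := Matrix.PosDef.one.add_posSemidef (hpsd.add (hpsd.add hpsd))
  have hschur : 2 • ((1 - W₀) * (1 + W₀)) - -(1 - W₀) * -(1 - W₀) = (1 - W₀) * S := by
    rw [hS]; noncomm_ring
  set R : Matrix (Fin a) (Fin a) ℝ := (open scoped MatrixOrder in CFC.sqrt (1 - W₀)) with hR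
  have hRR : R * R = 1 - W₀ := open scoped MatrixOrder in CFC.sqrt_mul_sqrt_self _ hP.posSemidef.nonneg
  have hRH : Rᴴ = R := open scoped MatrixOrder in (CFC.sqrt_nonneg (1 - W₀)).posSemidef.1
  have hRW : R * W₀ = W₀ * R := by
    have h := mul_assoc R R R
    rw [hRR] at h
    have h' : R - R * W₀ = R - W₀ * R := by
      calc R - R * W₀ = R * (1 - W₀) := by rw [mul_sub, mul_one]
      _ = (1 - W₀) * R := h.symm
      _ = R - W₀ * R := by rw [sub_mul, one_mul]
    exact sub_right_injective h'
  have hRS : R * S = S * R := by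
    simp only [hS, mul_add, add_mul, mul_one, one_mul, hRW]
  have hPSpsd : ((1 - W₀) * S).PosSemidef := by
    have := hSpd.posSemidef.mul_mul_conjTranspose_same R
    rwa [hRH, mul_assoc, ← hRS, ← mul_assoc, hRR] at this
  haveI : Invertible (1 : Matrix (Fin a) (Fin a) ℝ) := invertibleOne
  have hMpsd : (fromBlocks (2 • ((1 - W₀) * (1 + W₀))) (-(1 - W₀)) (-(1 - W₀))
      (1 : Matrix (Fin a) (Fin a) ℝ)).PosSemidef := by
    nth_rewrite 2 [show (-(1 - W₀) : Matrix (Fin a) (Fin a) ℝ) = (-(1 - W₀))ᴴ from hPH.symm]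
    rw [Matrix.PosDef.fromBlocks₂₂ _ _ Matrix.PosDef.one, hPH, inv_one, mul_one, hschur]
    exact hPSpsd
  have hMunit : IsUnit (fromBlocks (2 • ((1 - W₀) * (1 + W₀))) (-(1 - W₀)) (-(1 - W₀))
      (1 : Matrix (Fin a) (Fin a) ℝ)) := by
    rw [Matrix.isUnit_iff_isUnit_det, Matrix.det_fromBlocks₂₂, invOf_one, mul_one, hschur,
      det_one, one_mul, det_mul]
    exact ((mul_pos hP.det_pos hSpd.det_pos).ne').isUnit
  exact psd_isUnit_posDef hMpsd hMunit
end

section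
/- For each i = 1,…,N, let f_i : ℝ^{n₁+⋯+n_N} → ℝ be differentiable and, as a function of the block x_i ∈ ℝ^{n_i} with the other blocks fixed, convex; assume f_i(x) = 0 whenever x_i = 0; and let every component g_i^j of g_i : ℝ^{n_i} → ℝ^{q_i} be differentiable and convex with g_i^j(0) ≤ 0. Suppose x* ∈ ℝ^{n₁+⋯+n_N}, λ* ∈ ℝ^{n₀}, and α_i* ∈ ℝ^{q_i} satisfy, for each i: (stationarity) ∇_{x_i} Σ_{s=1}^N f_s(x*) − A_iᵀλ* + J_{g_i}(x_i*)ᵀ α_i* = 0, where J_{g_i} denotes the Jacobian matrix of g_i; (dual feasibility) α_i* ≥ 0 componentwise; and (complementary slackness) α_{i,j}* · g_i^j(x_i*) = 0 for all j. Then, with the shadow price π_i* = A_iᵀλ* − ∇_{x_i} Σ_{s≠i} f_s(x*), every participant's net cost is nonpositive: f_i(x*) − (π_i*)ᵀ x_i* ≤ 0 for every i. -/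
open Matrix Finset RealInnerProductSpace

section Aux

variable {E : Type*} [NormedAddCommGroup E] [InnerProductSpace ℝ E] [CompleteSpace E]

lemma inner_gradient_eq_fderiv {φ : E → ℝ} {x : E} (hd : DifferentiableAt ℝ φ x) (v : E) :
    ⟪gradient φ x, v⟫ = fderiv ℝ φ x v := by
  have h := hasGradientAt_iff_hasFDerivAt.mp hd.hasGradientAt
  rw [h.fderiv]
  exact (InnerProductSpace.toDual_apply_apply).symm

lemma gradient_add' {φ ψ : E → ℝ} {x : E} (hφ : DifferentiableAt ℝ φ x)
    (hψ : DifferentiableAt ℝ ψ x) :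
    gradient (fun z => φ z + ψ z) x = gradient φ x + gradient ψ x := by
  have h1 := hasGradientAt_iff_hasFDerivAt.mp hφ.hasGradientAt
  have h2 := hasGradientAt_iff_hasFDerivAt.mp hψ.hasGradientAt
  have h3 : HasGradientAt (fun z => φ z + ψ z) (gradient φ x + gradient ψ x) x := by
    rw [hasGradientAt_iff_hasFDerivAt, map_add]
    exact h1.add h2
  exact h3.gradient

/-- Tangent line inequality for convex differentiable functions. -/
lemma tangent_le {φ : E → ℝ} {x : E} (hc : ConvexOn ℝ Set.univ φ)
    (hd : DifferentiableAt ℝ φ x) (y : E) :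
    ⟪gradient φ x, y - x⟫ ≤ φ y - φ x := by
  have hcurve : HasDerivAt (fun t : ℝ => x + t • (y - x)) (y - x) 0 := by
    simpa using ((hasDerivAt_id (0 : ℝ)).smul_const (y - x)).const_add x
  have hF : HasFDerivAt φ (InnerProductSpace.toDual ℝ E (gradient φ x))
      (x + (0 : ℝ) • (y - x)) := by
    simpa using hasGradientAt_iff_hasFDerivAt.mp hd.hasGradientAt
  have hψ : HasDerivAt (fun t : ℝ => φ (x + t • (y - x))) ⟪gradient φ x, y - x⟫ 0 := by
    have := hF.comp_hasDerivAt 0 hcurve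
    simpa [Function.comp_def, InnerProductSpace.toDual_apply_apply] using this
  have hconv : ConvexOn ℝ Set.univ (fun t : ℝ => φ (x + t • (y - x))) := by
    have := hc.comp_affineMap (AffineMap.lineMap x y)
    simp only [Set.preimage_univ] at this
    refine this.congr ?_
    intro t _
    simp [AffineMap.lineMap_apply, add_comm]
  have hslope := hconv.le_slope_of_hasDerivAt (Set.mem_univ (0 : ℝ))
    (Set.mem_univ (1 : ℝ)) zero_lt_one hψ
  simpa [slope_def_field] using hslope

end Aux

/-- Individual rationality of the shadow pricing mechanism: at a KKT point of (P₁),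
with the shadow price πᵢ* = Aᵢᵀλ* − ∇_{xᵢ} Σ_{s≠i} f_s(x*), every participant's net
cost fᵢ(x*) − ⟪πᵢ*, xᵢ*⟫ is nonpositive. -/
theorem stmt10 (N n₀ : ℕ) (n q : Fin N → ℕ)
    (f : Fin N → (∀ i, EuclideanSpace ℝ (Fin (n i))) → ℝ)
    (g : ∀ i, EuclideanSpace ℝ (Fin (n i)) → Fin (q i) → ℝ)
    (A : ∀ i, EuclideanSpace ℝ (Fin (n i)) →L[ℝ] EuclideanSpace ℝ (Fin n₀))
    (hfdiff : ∀ i, Differentiable ℝ (f i))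
    (hfconv : ∀ i (x : ∀ j, EuclideanSpace ℝ (Fin (n j))),
      ConvexOn ℝ Set.univ (fun z => f i (Function.update x i z)))
    (hfzero : ∀ i (x : ∀ j, EuclideanSpace ℝ (Fin (n j))), x i = 0 → f i x = 0)
    (hgdiff : ∀ i j, Differentiable ℝ (fun z => g i z j))
    (hgconv : ∀ i j, ConvexOn ℝ Set.univ (fun z => g i z j))
    (hg0 : ∀ i j, g i 0 j ≤ 0)
    (xstar : ∀ i, EuclideanSpace ℝ (Fin (n i)))
    (lamstar : EuclideanSpace ℝ (Fin n₀))
    (αstar : ∀ i, Fin (q i) → ℝ)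
    -- stationarity: ∇_{xᵢ} Σ_s f_s(x*) − Aᵢᵀλ* + J_{gᵢ}(xᵢ*)ᵀ αᵢ* = 0
    (hstat : ∀ i,
      gradient (fun z => ∑ s, f s (Function.update xstar i z)) (xstar i)
        - ContinuousLinearMap.adjoint (A i) lamstar
        + ∑ j, αstar i j • gradient (fun z => g i z j) (xstar i) = 0)
    -- dual feasibility
    (hdual : ∀ i j, 0 ≤ αstar i j)
    -- complementary slackness
    (hcomp : ∀ i j, αstar i j * g i (xstar i) j = 0) :
    ∀ i, f i xstar -
      ⟪ContinuousLinearMap.adjoint (A i) lamstar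
        - gradient (fun z => ∑ s ∈ Finset.univ.erase i,
            f s (Function.update xstar i z)) (xstar i),
        xstar i⟫ ≤ 0 := by
  intro i
  set x := xstar i with hx
  -- differentiability of block functions
  have hupd : ∀ z : EuclideanSpace ℝ (Fin (n i)),
      DifferentiableAt ℝ (fun w => Function.update xstar i w) z :=
    fun z => (hasFDerivAt_update xstar z).differentiableAt
  have hdiffblock : ∀ (s : Fin N) (z : EuclideanSpace ℝ (Fin (n i))),
      DifferentiableAt ℝ (fun w => f s (Function.update xstar i w)) z :=
    fun s z => ((hfdiff s) (Function.update xstar i z)).comp z (hupd z)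
  have hdiffsum : ∀ (T : Finset (Fin N)) (z : EuclideanSpace ℝ (Fin (n i))),
      DifferentiableAt ℝ (fun w => ∑ s ∈ T, f s (Function.update xstar i w)) z :=
    fun T z => DifferentiableAt.fun_sum (fun s _ => hdiffblock s z)
  -- decompose gradient of full sum
  have hsplit : (fun z => ∑ s, f s (Function.update xstar i z))
      = fun z => f i (Function.update xstar i z)
        + ∑ s ∈ Finset.univ.erase i, f s (Function.update xstar i z) := by
    funext z
    exact (Finset.add_sum_erase _ _ (Finset.mem_univ i)).symm
  have hgradsplit : gradient (fun z => ∑ s, f s (Function.update xstar i z)) x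
      = gradient (fun z => f i (Function.update xstar i z)) x
        + gradient (fun z => ∑ s ∈ Finset.univ.erase i,
            f s (Function.update xstar i z)) x := by
    rw [hsplit]
    exact gradient_add' (hdiffblock i x) (hdiffsum _ x)
  -- rearrange stationarity
  have hpi : ContinuousLinearMap.adjoint (A i) lamstar
      - gradient (fun z => ∑ s ∈ Finset.univ.erase i, f s (Function.update xstar i z)) x
      = gradient (fun z => f i (Function.update xstar i z)) x
        + ∑ j, αstar i j • gradient (fun z => g i z j) x := by
    have h := hstat i
    rw [← hx] at h
    rw [hgradsplit] at h
    have := sub_eq_zero.mpr h.symm  -- not useful; do linear algebra directly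
    abel_nf at h ⊢
    linear_combination (norm := abel_nf) -h
  -- key convexity bounds
  have hfi : f i xstar ≤ ⟪gradient (fun z => f i (Function.update xstar i z)) x, x⟫ := by
    have ht := tangent_le (hfconv i xstar) (hdiffblock i x) 0
    have h0 : f i (Function.update xstar i 0) = 0 :=
      hfzero i _ (Function.update_self i 0 xstar)
    have hxx : f i (Function.update xstar i x) = f i xstar := by
      rw [hx, Function.update_eq_self]
    rw [zero_sub, inner_neg_right, h0, hxx] at ht
    linarith
  have hgj : ∀ j, 0 ≤ αstar i j * ⟪gradient (fun z => g i z j) x, x⟫ := by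
    intro j
    have ht := tangent_le (hgconv i j) ((hgdiff i j) x) 0
    rw [zero_sub, inner_neg_right] at ht
    have h1 : g i x j - g i 0 j ≤ ⟪gradient (fun z => g i z j) x, x⟫ := by linarith
    rcases (mul_eq_zero.mp (hcomp i j)) with h | h
    · simp [h]
    · have h2 : 0 ≤ g i x j - g i 0 j := by
        have hxj : g i x j = 0 := by rw [hx]; exact h
        nlinarith [hg0 i j]
      nlinarith [hdual i j, mul_le_mul_of_nonneg_left h1 (hdual i j)]
  -- put it together
  rw [hpi, inner_add_left, sum_inner]
  have hsum : 0 ≤ ∑ j, ⟪αstar i j • gradient (fun z => g i z j) x, x⟫ := by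
    apply Finset.sum_nonneg
    intro j _
    rw [real_inner_smul_left]
    exact hgj j
  linarith
end

section
/- For each i = 1,…,N, let f_i : ℝ^{n₁+⋯+n_N} → ℝ be differentiable and, as a function of the block x_i ∈ ℝ^{n_i} with the other blocks fixed, convex, and let every component g_i^j of g_i : ℝ^{n_i} → ℝ^{q_i} be differentiable and convex. Suppose x*, λ*, α₁*,…,α_N* satisfy the full Karush–Kuhn–Tucker conditions of problem (P₁): for each i, ∇_{x_i} Σ_s f_s(x*) − A_iᵀλ* + J_{g_i}(x_i*)ᵀ α_i* = 0, g_i(x_i*) ≤ 0, Σ_s A_s x_s* = d, α_i* ≥ 0, and α_{i,j}* · g_i^j(x_i*) = 0 for all j. Define π_i* = A_iᵀλ* − ∇_{x_i} Σ_{s≠i} f_s(x*). Then for each i, x_i* is a global minimizer of the function x_i ↦ f_i(x_i, x_{-i}*) − (π_i*)ᵀ x_i over the set {x_i ∈ ℝ^{n_i} : g_i(x_i) ≤ 0 and A_i x_i = d − Σ_{s≠i} A_s x_s*}; that is, x* is an equilibrium of the shadow-pricing game among the participants. -/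
open Matrix Finset RealInnerProductSpace

section Aux

variable {E : Type*} [NormedAddCommGroup E] [InnerProductSpace ℝ E] [CompleteSpace E]

lemma hasGradientAt_add' {φ ψ : E → ℝ} {a b : E} {x : E}
    (hφ : HasGradientAt φ a x) (hψ : HasGradientAt ψ b x) :
    HasGradientAt (fun w => φ w + ψ w) (a + b) x := by
  rw [hasGradientAt_iff_hasFDerivAt] at *
  rw [map_add]
  exact hφ.add hψ

/-- gradient inequality for convex differentiable functions -/
lemma convex_grad_ineq {φ : E → ℝ} (hc : ConvexOn ℝ Set.univ φ)
    {x y G : E} (hG : HasGradientAt φ G x) :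
    φ x + ⟪G, y - x⟫ ≤ φ y := by
  set L : ℝ → E := fun t => x + t • (y - x) with hL
  have hLd : ∀ t : ℝ, HasDerivAt L (y - x) t := by
    intro t
    simpa [L] using ((hasDerivAt_id t).smul_const (y - x)).const_add x
  have hψd : HasDerivAt (fun t => φ (L t)) ⟪G, y - x⟫ 0 := by
    have hx0 : HasFDerivAt φ ((InnerProductSpace.toDual ℝ E) G) (L 0) := by
      simpa [L] using hG.hasFDerivAt
    have := (hx0.comp_hasDerivAt 0 (hLd 0))
    exact (by simpa [InnerProductSpace.toDual_apply_apply] using this : HasDerivAt (φ ∘ L) ⟪G, y - x⟫ 0)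
  have hψc : ConvexOn ℝ Set.univ (fun t : ℝ => φ (L t)) := by
    have haff : ConvexOn ℝ ((AffineMap.lineMap x y : ℝ →ᵃ[ℝ] E) ⁻¹' Set.univ)
        (φ ∘ (AffineMap.lineMap x y : ℝ →ᵃ[ℝ] E)) := hc.comp_affineMap _
    have heq : (φ ∘ (AffineMap.lineMap x y : ℝ →ᵃ[ℝ] E)) = fun t : ℝ => φ (L t) := by
      funext t
      simp [Function.comp, AffineMap.lineMap_apply, L, add_comm]
    rw [heq, Set.preimage_univ] at haff
    exact haff
  have := hψc.le_slope_of_hasDerivAt (Set.mem_univ (0:ℝ)) (Set.mem_univ (1:ℝ))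
    one_pos hψd
  rw [slope_def_field] at this
  have h0 : L 0 = x := by simp [L]
  have h1 : L 1 = y := by simp [L]
  simp only [h0, h1] at this
  have : ⟪G, y - x⟫ ≤ φ y - φ x := by
    simpa [div_one] using this
  linarith

end Aux

/-- Social efficiency of the shadow pricing mechanism: at a KKT point of (P₁), every
participant's component xᵢ* globally minimizes its own priced net cost
xᵢ ↦ fᵢ(xᵢ, x₋ᵢ*) − ⟪πᵢ*, xᵢ⟫ over its feasible unilateral deviations, i.e. x* is an
equilibrium of the shadow-pricing game. -/
theorem stmt11 (N n₀ : ℕ) (n q : Fin N → ℕ)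
    (f : Fin N → (∀ i, EuclideanSpace ℝ (Fin (n i))) → ℝ)
    (g : ∀ i, EuclideanSpace ℝ (Fin (n i)) → Fin (q i) → ℝ)
    (A : ∀ i, EuclideanSpace ℝ (Fin (n i)) →L[ℝ] EuclideanSpace ℝ (Fin n₀))
    (d : EuclideanSpace ℝ (Fin n₀))
    (hfdiff : ∀ i, Differentiable ℝ (f i))
    (hfconv : ∀ i (x : ∀ j, EuclideanSpace ℝ (Fin (n j))),
      ConvexOn ℝ Set.univ (fun z => f i (Function.update x i z)))
    (hgdiff : ∀ i j, Differentiable ℝ (fun z => g i z j))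
    (hgconv : ∀ i j, ConvexOn ℝ Set.univ (fun z => g i z j))
    (xstar : ∀ i, EuclideanSpace ℝ (Fin (n i)))
    (lamstar : EuclideanSpace ℝ (Fin n₀))
    (αstar : ∀ i, Fin (q i) → ℝ)
    -- stationarity: ∇_{xᵢ} Σ_s f_s(x*) − Aᵢᵀλ* + J_{gᵢ}(xᵢ*)ᵀ αᵢ* = 0
    (hstat : ∀ i,
      gradient (fun z => ∑ s, f s (Function.update xstar i z)) (xstar i)
        - ContinuousLinearMap.adjoint (A i) lamstar
        + ∑ j, αstar i j • gradient (fun z => g i z j) (xstar i) = 0)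
    -- primal feasibility
    (hfeas_g : ∀ i j, g i (xstar i) j ≤ 0)
    (hfeas_A : ∑ s, A s (xstar s) = d)
    -- dual feasibility
    (hdual : ∀ i j, 0 ≤ αstar i j)
    -- complementary slackness
    (hcomp : ∀ i j, αstar i j * g i (xstar i) j = 0) :
    ∀ i, ∀ z : EuclideanSpace ℝ (Fin (n i)),
      (∀ j, g i z j ≤ 0) →
      A i z = d - ∑ s ∈ Finset.univ.erase i, A s (xstar s) →
      f i xstar -
        ⟪ContinuousLinearMap.adjoint (A i) lamstar
          - gradient (fun w => ∑ s ∈ Finset.univ.erase i,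
              f s (Function.update xstar i w)) (xstar i), xstar i⟫ ≤
      f i (Function.update xstar i z) -
        ⟪ContinuousLinearMap.adjoint (A i) lamstar
          - gradient (fun w => ∑ s ∈ Finset.univ.erase i,
              f s (Function.update xstar i w)) (xstar i), z⟫ := by
  intro i z hgz _
  have hupd : Differentiable ℝ (Function.update xstar i) :=
    fun y => (hasFDerivAt_update xstar y).differentiableAt
  have hdiffcomp : ∀ s, Differentiable ℝ (fun w => f s (Function.update xstar i w)) :=
    fun s => (hfdiff s).comp hupd
  set u := xstar i with hu
  set h : EuclideanSpace ℝ (Fin (n i)) → ℝ := fun w => f i (Function.update xstar i w) with hh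
  set G2 : EuclideanSpace ℝ (Fin (n i)) → ℝ :=
    fun w => ∑ s ∈ Finset.univ.erase i, f s (Function.update xstar i w) with hG2
  have hG2d : Differentiable ℝ G2 := by
    apply Differentiable.fun_sum
    intro s _
    exact hdiffcomp s
  have hhd : Differentiable ℝ h := hdiffcomp i
  -- the gradient of the full sum splits
  have hsplit : (fun w => ∑ s, f s (Function.update xstar i w)) = fun w => h w + G2 w := by
    funext w
    exact (Finset.add_sum_erase Finset.univ _ (Finset.mem_univ i)).symm
  have hGsum : gradient (fun w => ∑ s, f s (Function.update xstar i w)) u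
      = gradient h u + gradient G2 u := by
    rw [hsplit]
    exact (hasGradientAt_add' (hhd u).hasGradientAt (hG2d u).hasGradientAt).gradient
  set p := ContinuousLinearMap.adjoint (A i) lamstar - gradient G2 u with hp
  set S := ∑ j, αstar i j • gradient (fun w => g i w j) u with hS
  have hstat' := hstat i
  rw [hGsum] at hstat'
  have hGh : gradient h u = p - S := by
    rw [hp]
    have : gradient h u + gradient G2 u - ContinuousLinearMap.adjoint (A i) lamstar + S = 0 :=
      hstat'
    linear_combination (norm := module) this
  -- convexity inequalities
  have hf_ineq : h u + ⟪gradient h u, z - u⟫ ≤ h z :=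
    convex_grad_ineq (hfconv i xstar) (hhd u).hasGradientAt
  have hg_ineq : ∀ j, ⟪gradient (fun w => g i w j) u, z - u⟫ ≤ g i z j - g i u j := by
    intro j
    have := convex_grad_ineq (hgconv i j) (y := z) ((hgdiff i j) u).hasGradientAt
    linarith
  have hSle : ⟪S, z - u⟫ ≤ 0 := by
    rw [hS, sum_inner]
    calc ∑ j, ⟪αstar i j • gradient (fun w => g i w j) u, z - u⟫
        = ∑ j, αstar i j * ⟪gradient (fun w => g i w j) u, z - u⟫ :=
          Finset.sum_congr rfl fun j _ => real_inner_smul_left _ _ _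
      _ ≤ ∑ j, αstar i j * (g i z j - g i u j) :=
          Finset.sum_le_sum fun j _ =>
            mul_le_mul_of_nonneg_left (hg_ineq j) (hdual i j)
      _ = ∑ j, αstar i j * g i z j := by
          refine Finset.sum_congr rfl fun j _ => ?_
          have h0 := hcomp i j
          rw [← hu] at h0
          rw [mul_sub, h0]
          ring
      _ ≤ 0 := Finset.sum_nonpos fun j _ =>
          mul_nonpos_of_nonneg_of_nonpos (hdual i j) (hgz j)
  have hfx : f i xstar = h u := by
    simp only [hh, hu, Function.update_eq_self]
  have hinner : ⟪gradient h u, z - u⟫ = ⟪p, z⟫ - ⟪p, u⟫ - ⟪S, z - u⟫ := by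
    rw [hGh, inner_sub_left, inner_sub_right]
  rw [hfx]
  show h u - ⟪p, u⟫ ≤ h z - ⟪p, z⟫
  linarith [hf_ineq, hSle, hinner]
end

section
/- Let N ≥ 1, c₀ > 0, d > 0, and γ ∈ ℝ^N. Consider minimizing F(x) = Σ_{i=1}^N [c₀(x_i² + x_i·Σ_{s=1}^N x_s) + γ_i x_i] over the set {x ∈ ℝ^N : Σ_{i=1}^N x_i = d and x_i ≥ 0 for all i}. Let T ⊆ {1,…,N} be nonempty, write T₀ = |T| and S = Σ_{t∈T} γ_t, and suppose: (a) d/T₀ + (1/(2c₀))(S/T₀ − γ_i) ≥ 0 for every i ∈ T; and (b) γ_i ≥ (2c₀d + S)/T₀ for every i ∉ T. Then the point x* defined by x_i* = d/T₀ + (1/(2c₀))(S/T₀ − γ_i) for i ∈ T and x_i* = 0 for i ∉ T is the unique global minimizer of F over the feasible set, and the Karush–Kuhn–Tucker conditions hold at x* with equality-constraint multiplier λ* = 2c₀d(T₀+1)/T₀ + S/T₀ and inequality multipliers α_i* = 0 for i ∈ T and α_i* = γ_i − (2c₀d + S)/T₀ ≥ 0 for i ∉ T. -/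
open Finset

/-- Explicit solution and KKT certificate for the single-demand commodity allocation
problem with linear congestion cost. -/
theorem stmt18 (N : ℕ) (hN : 1 ≤ N) (c₀ d : ℝ) (hc₀ : 0 < c₀) (hd : 0 < d)
    (γ : Fin N → ℝ)
    (F : (Fin N → ℝ) → ℝ)
    (hF : ∀ x, F x = ∑ i, (c₀ * ((x i) ^ 2 + x i * ∑ s, x s) + γ i * x i))
    (T : Finset (Fin N)) (hT : T.Nonempty)
    (T₀ : ℕ) (hT₀ : T₀ = T.card) (S : ℝ) (hS : S = ∑ t ∈ T, γ t)
    (ha : ∀ i ∈ T, 0 ≤ d / (T₀ : ℝ) + (1 / (2 * c₀)) * (S / (T₀ : ℝ) - γ i))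
    (hb : ∀ i ∉ T, (2 * c₀ * d + S) / (T₀ : ℝ) ≤ γ i)
    (xstar : Fin N → ℝ)
    (hxstar : ∀ i, xstar i =
      if i ∈ T then d / (T₀ : ℝ) + (1 / (2 * c₀)) * (S / (T₀ : ℝ) - γ i) else 0)
    (lamstar : ℝ) (hlam : lamstar = 2 * c₀ * d * ((T₀ : ℝ) + 1) / (T₀ : ℝ) + S / (T₀ : ℝ))
    (αstar : Fin N → ℝ)
    (hα : ∀ i, αstar i = if i ∈ T then 0 else γ i - (2 * c₀ * d + S) / (T₀ : ℝ)) :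
    -- x* is feasible and is the unique global minimizer of F over the feasible set
    ((∑ i, xstar i = d ∧ ∀ i, 0 ≤ xstar i) ∧
      (∀ x : Fin N → ℝ, (∑ i, x i = d) → (∀ i, 0 ≤ x i) → x ≠ xstar → F xstar < F x)) ∧
    -- the KKT conditions hold at x* with multipliers λ* and α*
    ((∀ i, 2 * c₀ * xstar i + 2 * c₀ * (∑ s, xstar s) + γ i - lamstar - αstar i = 0) ∧
      (∀ i, 0 ≤ αstar i) ∧ (∀ i, αstar i * xstar i = 0)) := by
  have hc₀' : c₀ ≠ 0 := ne_of_gt hc₀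
  have hT0pos : 0 < (T₀ : ℝ) := by
    have : 0 < T.card := Finset.card_pos.mpr hT
    exact_mod_cast hT₀ ▸ (Nat.cast_pos.mpr this)
  have hT0ne : (T₀ : ℝ) ≠ 0 := ne_of_gt hT0pos
  set μ : ℝ := (2 * c₀ * d + S) / (T₀ : ℝ) with hμ
  -- sum of xstar is d
  have hsum : ∑ i, xstar i = d := by
    have h1 : ∑ i, xstar i = ∑ i ∈ T, (d / (T₀ : ℝ) + (1 / (2 * c₀)) * (S / (T₀ : ℝ) - γ i)) := by
      rw [Finset.sum_congr rfl fun i _ => hxstar i]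
      rw [Finset.sum_ite_mem, Finset.univ_inter]
    rw [h1, Finset.sum_add_distrib, Finset.sum_const, ← hT₀, ← Finset.mul_sum,
      Finset.sum_sub_distrib, Finset.sum_const, ← hT₀, ← hS, nsmul_eq_mul, nsmul_eq_mul]
    field_simp
    ring
  have hnn : ∀ i, 0 ≤ xstar i := by
    intro i
    rw [hxstar i]
    split
    · exact ha i ‹_›
    · exact le_refl 0
  -- key pointwise value of 2c₀ x* + γ on T
  have hk : ∀ i ∈ T, 2 * c₀ * xstar i + γ i = μ := by
    intro i hi
    rw [hxstar i, if_pos hi, hμ]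
    field_simp
    ring
  -- rewrite F on feasible set
  have hFeq : ∀ x : Fin N → ℝ, (∑ i, x i = d) →
      F x = c₀ * (∑ i, (x i) ^ 2) + c₀ * d ^ 2 + ∑ i, γ i * x i := by
    intro x hx
    rw [hF]
    simp only [hx]
    have h2 : ∀ i ∈ Finset.univ, c₀ * ((x i) ^ 2 + x i * d) + γ i * x i
        = c₀ * (x i)^2 + c₀ * d * x i + γ i * x i := fun i _ => by ring
    rw [Finset.sum_congr rfl h2, Finset.sum_add_distrib, Finset.sum_add_distrib,
      ← Finset.mul_sum, ← Finset.mul_sum, hx]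
    ring
  -- main decomposition
  have hdecomp : ∀ x : Fin N → ℝ, (∑ i, x i = d) →
      F x = F xstar + c₀ * (∑ i, (x i - xstar i) ^ 2)
        + ∑ i, (if i ∈ T then 0 else (γ i - μ) * x i) := by
    intro x hx
    rw [hFeq x hx, hFeq xstar hsum]
    have key : ∀ i, c₀ * (x i)^2 + γ i * x i
        = c₀ * (xstar i)^2 + γ i * xstar i + c₀ * (x i - xstar i)^2
          + (2 * c₀ * xstar i + γ i - μ) * (x i - xstar i) + μ * (x i - xstar i) := by
      intro i; ring
    have key2 : ∀ i, (2 * c₀ * xstar i + γ i - μ) * (x i - xstar i)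
        = if i ∈ T then 0 else (γ i - μ) * x i := by
      intro i
      by_cases hi : i ∈ T
      · rw [if_pos hi, hk i hi]; ring
      · rw [if_neg hi, hxstar i, if_neg hi]; ring
    have hsum1 : ∑ i, (c₀ * (x i)^2 + γ i * x i)
        = ∑ i, (c₀ * (xstar i)^2 + γ i * xstar i) + c₀ * (∑ i, (x i - xstar i)^2)
          + ∑ i, (if i ∈ T then 0 else (γ i - μ) * x i) + μ * ((∑ i, x i) - ∑ i, xstar i) := by
      rw [Finset.sum_congr rfl fun i _ => (key i).trans (by rw [key2 i])]
      rw [Finset.sum_add_distrib, Finset.sum_add_distrib, Finset.sum_add_distrib]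
      rw [← Finset.mul_sum, ← Finset.mul_sum, Finset.sum_sub_distrib]
    have e1 : ∑ i, (c₀ * (x i)^2 + γ i * x i) = c₀ * (∑ i, (x i)^2) + ∑ i, γ i * x i := by
      rw [Finset.sum_add_distrib, Finset.mul_sum]
    have e2 : ∑ i, (c₀ * (xstar i)^2 + γ i * xstar i)
        = c₀ * (∑ i, (xstar i)^2) + ∑ i, γ i * xstar i := by
      rw [Finset.sum_add_distrib, Finset.mul_sum]
    rw [e1, e2] at hsum1
    rw [hx, hsum] at hsum1
    linarith [hsum1]
  refine ⟨⟨⟨hsum, hnn⟩, ?_⟩, ?_, ?_, ?_⟩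
  · -- unique minimizer
    intro x hx hxnn hne
    have hpos : 0 < ∑ i, (x i - xstar i) ^ 2 := by
      obtain ⟨j, hj⟩ : ∃ j, x j ≠ xstar j := by
        by_contra h
        push_neg at h
        exact hne (funext h)
      apply Finset.sum_pos' (fun i _ => sq_nonneg _)
      exact ⟨j, Finset.mem_univ j, by
        have := sub_ne_zero.mpr hj
        positivity⟩
    have hnn2 : 0 ≤ ∑ i, (if i ∈ T then 0 else (γ i - μ) * x i) := by
      apply Finset.sum_nonneg
      intro i _
      split
      · exact le_refl 0
      · exact mul_nonneg (by linarith [hb i ‹_›]) (hxnn i)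
    rw [hdecomp x hx]
    nlinarith
  · -- stationarity
    intro i
    rw [hsum, hα i, hlam]
    by_cases hi : i ∈ T
    · rw [if_pos hi]
      have := hk i hi
      rw [hμ] at this
      field_simp at this ⊢
      linarith
    · rw [if_neg hi, hxstar i, if_neg hi, hμ]
      field_simp
      ring
  · -- dual feasibility
    intro i
    rw [hα i]
    split
    · exact le_refl 0
    · linarith [hb i ‹_›]
  · -- complementarity
    intro i
    rw [hα i, hxstar i]
    by_cases hi : i ∈ T
    · rw [if_pos hi, if_pos hi]; ring
    · rw [if_neg hi, if_neg hi]; ring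
end
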